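/- arXiv:1002.4377 — 2 statements merged into one kernel-verified Lean document; each statement's English description precedes it below -/
import Mathlib

section
/- Let W be a graphon such that (J, r_W) has finite packing dimension d. Then for every 0 < ε < 1 there is a measurable partition P of J into at most ε^{−O(ε^{−d})} classes such that ‖W − W_P‖₁ ≤ ε (an ultra-strong regularity partition with error ε). -/
open MeasureTheory

set_option maxHeartbeats 1000000

private lemma bddInt {α : Type*} [MeasurableSpace α] {ν : Measure α} [IsFiniteMeasure ν]
    {f : α → ℝ} (hm : AEStronglyMeasurable f ν) {C : ℝ} (hb : ∀ a, |f a| ≤ C) :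
    Integrable f ν :=
  (integrable_const C).mono' hm (Filter.Eventually.of_forall fun a => by
    simpa [Real.norm_eq_abs] using hb a)

private lemma measInt {α β : Type*} [MeasurableSpace α] [MeasurableSpace β]
    (ρ : Measure β) [IsFiniteMeasure ρ] {f : α → β → ℝ}
    (hm : Measurable (Function.uncurry f)) :
    Measurable fun a => ∫ b, f a b ∂ρ :=
  (MeasureTheory.StronglyMeasurable.integral_prod_right hm.stronglyMeasurable).measurable

private lemma swapInt {α β : Type*} [MeasurableSpace α] [MeasurableSpace β]
    (ν : Measure α) (ρ : Measure β) [IsFiniteMeasure ν] [IsFiniteMeasure ρ]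
    {f : α → β → ℝ} (hm : Measurable (Function.uncurry f)) {C : ℝ}
    (hb : ∀ a b, |f a b| ≤ C) :
    ∫ a, ∫ b, f a b ∂ρ ∂ν = ∫ b, ∫ a, f a b ∂ν ∂ρ :=
  integral_integral_swap (bddInt hm.aestronglyMeasurable (C := C) fun p => hb p.1 p.2)

private lemma int01 {J : Type*} [MeasurableSpace J] (μ : Measure J) [IsFiniteMeasure μ]
    (s : Set J) (g : J → ℝ) (hg : Measurable g) (h0 : ∀ a, 0 ≤ g a) (h1 : ∀ a, g a ≤ 1) :
    0 ≤ (∫ a in s, g a ∂μ) ∧ (∫ a in s, g a ∂μ) ≤ (μ s).toReal := by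
  refine ⟨integral_nonneg h0, ?_⟩
  calc (∫ a in s, g a ∂μ) ≤ ∫ _ in s, (1:ℝ) ∂μ :=
        integral_mono (bddInt hg.aestronglyMeasurable (C := 1)
          (fun a => abs_le.mpr ⟨by linarith [h0 a], h1 a⟩)) (integrable_const 1) h1
    _ = (μ s).toReal := by simp [measureReal_def]

private lemma measReal_le_one {J : Type*} [MeasurableSpace J] (μ : Measure J)
    [IsProbabilityMeasure μ] (s : Set J) : (μ s).toReal ≤ 1 := by
  have h1 : μ s ≤ 1 := le_trans (measure_mono (Set.subset_univ s)) (le_of_eq measure_univ)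
  simpa using ENNReal.toReal_mono (by norm_num : (1:ENNReal) ≠ ⊤) h1

private lemma partSum {J : Type*} [MeasurableSpace J] (μ : Measure J) {m : ℕ}
    (P : Fin m → Set J) (hPmeas : ∀ i, MeasurableSet (P i))
    (hPdisj : ∀ i j, i ≠ j → Disjoint (P i) (P j)) (hPcov : (⋃ i, P i) = Set.univ)
    (g : J → ℝ) (hg : Integrable g μ) :
    ∫ x, g x ∂μ = ∑ i, ∫ x in P i, g x ∂μ := by
  rw [← setIntegral_univ (f := g) (μ := μ), ← hPcov,
    integral_iUnion hPmeas (fun i j hij => hPdisj i j hij) hg.integrableOn, tsum_fintype]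

private lemma avg01 {J : Type*} [MeasurableSpace J] (μ : Measure J) [IsProbabilityMeasure μ]
    (W : J → J → ℝ) (hWmeas : Measurable fun p : J × J => W p.1 p.2)
    (hW0 : ∀ x y, 0 ≤ W x y) (hW1 : ∀ x y, W x y ≤ 1) (s t : Set J) :
    0 ≤ (∫ u in s, ∫ v in t, W u v ∂μ ∂μ) / ((μ s).toReal * (μ t).toReal) ∧
    (∫ u in s, ∫ v in t, W u v ∂μ ∂μ) / ((μ s).toReal * (μ t).toReal) ≤ 1 := by
  have hWm1 : ∀ a, Measurable (W a) := fun a => hWmeas.comp measurable_prodMk_left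
  have hnum0 : 0 ≤ ∫ u in s, ∫ v in t, W u v ∂μ ∂μ :=
    integral_nonneg fun u => integral_nonneg fun v => hW0 u v
  by_cases h0 : (μ s).toReal * (μ t).toReal = 0
  · rw [h0, div_zero]
    norm_num
  · have hpos : 0 < (μ s).toReal * (μ t).toReal :=
      lt_of_le_of_ne (mul_nonneg ENNReal.toReal_nonneg ENNReal.toReal_nonneg) (Ne.symm h0)
    have hnum_le : (∫ u in s, ∫ v in t, W u v ∂μ ∂μ) ≤ (μ s).toReal * (μ t).toReal := by
      calc (∫ u in s, ∫ v in t, W u v ∂μ ∂μ) ≤ ∫ _ in s, (μ t).toReal ∂μ := by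
            apply integral_mono _ (integrable_const _)
              (fun u => (int01 μ t (fun v => W u v) (hWm1 u) (hW0 u) (hW1 u)).2)
            apply bddInt (measInt (μ.restrict t) (f := fun u v => W u v)
              hWmeas).aestronglyMeasurable (C := 1)
            intro u
            have h01 := int01 μ t (fun v => W u v) (hWm1 u) (hW0 u) (hW1 u)
            rw [abs_le]
            exact ⟨by linarith [h01.1], h01.2.trans (measReal_le_one μ t)⟩
        _ = (μ s).toReal * (μ t).toReal := by simp [mul_comm, measureReal_def]
    exact ⟨div_nonneg hnum0 hpos.le, by rw [div_le_one hpos]; exact hnum_le⟩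

private lemma int_le_const {J : Type*} [MeasurableSpace J] (μ : Measure J)
    [IsProbabilityMeasure μ] (s : Set J) (g : J → ℝ) (hg : Measurable g) (C : ℝ) (hC : 0 ≤ C)
    (h0 : ∀ a, 0 ≤ g a) (h1 : ∀ a, g a ≤ C) : |∫ a in s, g a ∂μ| ≤ C := by
  rw [abs_of_nonneg (integral_nonneg h0)]
  calc (∫ a in s, g a ∂μ) ≤ ∫ _ in s, C ∂μ :=
        integral_mono (bddInt hg.aestronglyMeasurable (C := C)
          (fun a => abs_le.mpr ⟨by linarith [h0 a], h1 a⟩)) (integrable_const C) h1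
    _ = (μ s).toReal * C := by rw [setIntegral_const, smul_eq_mul, measureReal_def]
    _ ≤ 1 * C := mul_le_mul_of_nonneg_right (measReal_le_one μ s) hC
    _ = C := one_mul C

private lemma int_le_const' {J : Type*} [MeasurableSpace J] (μ : Measure J)
    [IsProbabilityMeasure μ] (g : J → ℝ) (hg : Measurable g) (C : ℝ) (hC : 0 ≤ C)
    (h0 : ∀ a, 0 ≤ g a) (h1 : ∀ a, g a ≤ C) : |∫ a, g a ∂μ| ≤ C := by
  rw [abs_of_nonneg (integral_nonneg h0)]
  calc (∫ a, g a ∂μ) ≤ ∫ _, C ∂μ :=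
        integral_mono (bddInt hg.aestronglyMeasurable (C := C)
          (fun a => abs_le.mpr ⟨by linarith [h0 a], h1 a⟩)) (integrable_const C) h1
    _ = C := by simp
private lemma pointBound {J : Type*} [MeasurableSpace J] (μ : Measure J) [IsProbabilityMeasure μ]
    (W : J → J → ℝ) (hWmeas : Measurable fun p : J × J => W p.1 p.2)
    (hW0 : ∀ x y, 0 ≤ W x y) (hW1 : ∀ x y, W x y ≤ 1)
    (s t : Set J) (hs : 0 < (μ s).toReal) (ht : 0 < (μ t).toReal) (x y : J) :
    |W x y - (∫ u in s, ∫ v in t, W u v ∂μ ∂μ) / ((μ s).toReal * (μ t).toReal)| ≤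
      (1/(μ s).toReal) * (∫ u in s, |W x y - W u y| ∂μ)
      + (1/((μ s).toReal * (μ t).toReal)) * (∫ u in s, ∫ v in t, |W u y - W u v| ∂μ ∂μ) := by
  have hWm1 : ∀ a, Measurable (W a) := fun a => hWmeas.comp measurable_prodMk_left
  have habs2 : ∀ a b g e, |W a b - W g e| ≤ (1:ℝ) := by
    intro a b g e
    rw [abs_le]
    constructor <;> nlinarith [hW0 a b, hW1 a b, hW0 g e, hW1 g e]
  have hWint : ∀ a, Integrable (W a) μ := fun a =>
    bddInt (hWm1 a).aestronglyMeasurable (C := 1)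
      (fun b => abs_le.mpr ⟨by linarith [hW0 a b], hW1 a b⟩)
  -- identities for the double integral of the difference
  have e1 : ∀ u, (∫ v in t, (W x y - W u v) ∂μ) = W x y * (μ t).toReal - ∫ v in t, W u v ∂μ := by
    intro u
    rw [integral_sub (integrable_const _) ((hWint u).restrict), setIntegral_const, smul_eq_mul, measureReal_def]
    ring
  have hg_b : ∀ u, |∫ v in t, W u v ∂μ| ≤ 1 := by
    intro u
    have h01 := int01 μ t (fun v => W u v) (hWm1 u) (hW0 u) (hW1 u)
    rw [abs_le]
    exact ⟨by linarith [h01.1], h01.2.trans (measReal_le_one μ t)⟩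
  have hIu : Integrable (fun u => ∫ v in t, W u v ∂μ) (μ.restrict s) :=
    bddInt (measInt (μ.restrict t) (f := fun u v => W u v) hWmeas).aestronglyMeasurable
      (C := 1) hg_b
  have e2 : (∫ u in s, ∫ v in t, (W x y - W u v) ∂μ ∂μ)
      = W x y * ((μ s).toReal * (μ t).toReal) - ∫ u in s, ∫ v in t, W u v ∂μ ∂μ := by
    rw [integral_congr_ae (Filter.Eventually.of_forall e1),
      integral_sub (integrable_const _) hIu, setIntegral_const, smul_eq_mul, measureReal_def]
    ring
  have hIabs : ∀ u, Integrable (fun v => |W x y - W u v|) (μ.restrict t) := fun u =>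
    bddInt ((measurable_const.sub (hWm1 u)).abs).aestronglyMeasurable (C := 1)
      (fun v => by rw [abs_abs]; exact habs2 x y u v)
  have habs_m : Measurable fun u => ∫ v in t, |W x y - W u v| ∂μ :=
    measInt (μ.restrict t) (f := fun u v => |W x y - W u v|) (by fun_prop)
  have habs_b : ∀ u, |∫ v in t, |W x y - W u v| ∂μ| ≤ 1 := by
    intro u
    have h01 := int01 μ t (fun v => |W x y - W u v|) (by fun_prop)
      (fun v => abs_nonneg _) (fun v => habs2 x y u v)
    rw [abs_le]
    exact ⟨by linarith [h01.1], h01.2.trans (measReal_le_one μ t)⟩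
  have hIuabs : Integrable (fun u => ∫ v in t, |W x y - W u v| ∂μ) (μ.restrict s) :=
    bddInt habs_m.aestronglyMeasurable (C := 1) habs_b
  have habs_in_b : ∀ u, |∫ v in t, (W x y - W u v) ∂μ| ≤ 1 := by
    intro u
    calc |∫ v in t, (W x y - W u v) ∂μ| ≤ ∫ v in t, |W x y - W u v| ∂μ := by
          simpa [Real.norm_eq_abs] using
            norm_integral_le_integral_norm (μ := μ.restrict t) (fun v => W x y - W u v)
      _ ≤ 1 := by
          have h01 := int01 μ t (fun v => |W x y - W u v|) (by fun_prop)
            (fun v => abs_nonneg _) (fun v => habs2 x y u v)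
          exact h01.2.trans (measReal_le_one μ t)
  have c1 : |W x y * ((μ s).toReal * (μ t).toReal) - ∫ u in s, ∫ v in t, W u v ∂μ ∂μ|
      ≤ ∫ u in s, ∫ v in t, |W x y - W u v| ∂μ ∂μ := by
    rw [← e2]
    calc |∫ u in s, ∫ v in t, (W x y - W u v) ∂μ ∂μ|
        ≤ ∫ u in s, |∫ v in t, (W x y - W u v) ∂μ| ∂μ := by
          simpa [Real.norm_eq_abs] using
            norm_integral_le_integral_norm (μ := μ.restrict s)
              (fun u => ∫ v in t, (W x y - W u v) ∂μ)
      _ ≤ ∫ u in s, ∫ v in t, |W x y - W u v| ∂μ ∂μ := by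
          apply integral_mono _ hIuabs
          · intro u
            simpa [Real.norm_eq_abs] using
              norm_integral_le_integral_norm (μ := μ.restrict t) (fun v => W x y - W u v)
          · apply bddInt _ (C := 1) (fun u => by rw [abs_abs]; exact habs_in_b u)
            exact ((measInt (μ.restrict t) (f := fun u v => W x y - W u v)
              (by fun_prop)).abs).aestronglyMeasurable
  -- triangle inequality inside
  have hY_m : Measurable fun u => ∫ v in t, |W u y - W u v| ∂μ :=
    measInt (μ.restrict t) (f := fun u v => |W u y - W u v|) (by fun_prop)
  have hY_b : ∀ u, |∫ v in t, |W u y - W u v| ∂μ| ≤ 1 := by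
    intro u
    have h01 := int01 μ t (fun v => |W u y - W u v|) (by fun_prop)
      (fun v => abs_nonneg _) (fun v => habs2 u y u v)
    rw [abs_le]
    exact ⟨by linarith [h01.1], h01.2.trans (measReal_le_one μ t)⟩
  have hint1 : Integrable (fun u => |W x y - W u y| * (μ t).toReal) (μ.restrict s) := by
    apply Integrable.mul_const
    exact bddInt ((measurable_const.sub (hWmeas.comp measurable_prodMk_right)).abs).aestronglyMeasurable
      (C := 1) (fun u => by rw [abs_abs]; exact habs2 x y u y)
  have hint2 : Integrable (fun u => ∫ v in t, |W u y - W u v| ∂μ) (μ.restrict s) :=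
    bddInt hY_m.aestronglyMeasurable (C := 1) hY_b
  have c2 : (∫ u in s, ∫ v in t, |W x y - W u v| ∂μ ∂μ)
      ≤ (μ t).toReal * (∫ u in s, |W x y - W u y| ∂μ)
        + ∫ u in s, ∫ v in t, |W u y - W u v| ∂μ ∂μ := by
    have hpt : ∀ u, (∫ v in t, |W x y - W u v| ∂μ)
        ≤ |W x y - W u y| * (μ t).toReal + ∫ v in t, |W u y - W u v| ∂μ := by
      intro u
      have h1 : (∫ v in t, |W x y - W u v| ∂μ)
          ≤ ∫ v in t, (|W x y - W u y| + |W u y - W u v|) ∂μ :=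
        integral_mono (hIabs u) ((integrable_const _).add
          (bddInt ((measurable_const.sub (hWm1 u)).abs).aestronglyMeasurable (C := 1)
            (fun v => by rw [abs_abs]; exact habs2 u y u v)))
          (fun v => abs_sub_le _ _ _)
      rwa [integral_add (g := fun v => |W u y - W u v|) (integrable_const _)
        (bddInt ((measurable_const.sub (hWm1 u)).abs).aestronglyMeasurable (C := 1)
          (fun v => by rw [abs_abs]; exact habs2 u y u v)),
        setIntegral_const, smul_eq_mul, measureReal_def, mul_comm] at h1
    calc (∫ u in s, ∫ v in t, |W x y - W u v| ∂μ ∂μ)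
        ≤ ∫ u in s, (|W x y - W u y| * (μ t).toReal + ∫ v in t, |W u y - W u v| ∂μ) ∂μ :=
          integral_mono hIuabs (hint1.add hint2) hpt
      _ = (μ t).toReal * (∫ u in s, |W x y - W u y| ∂μ)
            + ∫ u in s, ∫ v in t, |W u y - W u v| ∂μ ∂μ := by
          rw [integral_add hint1 hint2, integral_mul_const]
          ring
  -- combine
  have hdiv : W x y - (∫ u in s, ∫ v in t, W u v ∂μ ∂μ) / ((μ s).toReal * (μ t).toReal)
      = (W x y * ((μ s).toReal * (μ t).toReal) - ∫ u in s, ∫ v in t, W u v ∂μ ∂μ)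
        / ((μ s).toReal * (μ t).toReal) := by
    field_simp
  rw [hdiv, abs_div, abs_of_pos (mul_pos hs ht)]
  calc |W x y * ((μ s).toReal * (μ t).toReal) - ∫ u in s, ∫ v in t, W u v ∂μ ∂μ|
        / ((μ s).toReal * (μ t).toReal)
      ≤ ((μ t).toReal * (∫ u in s, |W x y - W u y| ∂μ)
          + ∫ u in s, ∫ v in t, |W u y - W u v| ∂μ ∂μ) / ((μ s).toReal * (μ t).toReal) :=
        (div_le_div_iff_of_pos_right (mul_pos hs ht)).mpr (c1.trans c2)
    _ = (1/(μ s).toReal) * (∫ u in s, |W x y - W u y| ∂μ)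
          + (1/((μ s).toReal * (μ t).toReal)) * (∫ u in s, ∫ v in t, |W u y - W u v| ∂μ ∂μ) := by
        field_simp
private lemma pairBound {J : Type*} [MeasurableSpace J] (μ : Measure J) [IsProbabilityMeasure μ]
    (W : J → J → ℝ) (hWmeas : Measurable fun p : J × J => W p.1 p.2)
    (hW0 : ∀ x y, 0 ≤ W x y) (hW1 : ∀ x y, W x y ≤ 1) (s t : Set J) :
    (∫ x in s, ∫ y in t,
        |W x y - (∫ u in s, ∫ v in t, W u v ∂μ ∂μ) / ((μ s).toReal * (μ t).toReal)| ∂μ ∂μ)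
    ≤ (1/(μ s).toReal) * (∫ x in s, ∫ u in s, ∫ y in t, |W x y - W u y| ∂μ ∂μ ∂μ)
      + (1/(μ t).toReal) * (∫ y in t, ∫ v in t, ∫ u in s, |W u y - W u v| ∂μ ∂μ ∂μ) := by
  have hWm1 : ∀ a, Measurable (W a) := fun a => hWmeas.comp measurable_prodMk_left
  have habs2 : ∀ a b g e, |W a b - W g e| ≤ (1:ℝ) := by
    intro a b g e
    rw [abs_le]
    constructor <;> nlinarith [hW0 a b, hW1 a b, hW0 g e, hW1 g e]
  have hAnn : 0 ≤ (1/(μ s).toReal) *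
      (∫ x in s, ∫ u in s, ∫ y in t, |W x y - W u y| ∂μ ∂μ ∂μ) :=
    mul_nonneg (by positivity) (integral_nonneg fun _ => integral_nonneg fun _ =>
      integral_nonneg fun _ => abs_nonneg _)
  have hBnn : 0 ≤ (1/(μ t).toReal) *
      (∫ y in t, ∫ v in t, ∫ u in s, |W u y - W u v| ∂μ ∂μ ∂μ) :=
    mul_nonneg (by positivity) (integral_nonneg fun _ => integral_nonneg fun _ =>
      integral_nonneg fun _ => abs_nonneg _)
  by_cases hs0 : μ s = 0
  · have hLz : (∫ x in s, ∫ y in t,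
        |W x y - (∫ u in s, ∫ v in t, W u v ∂μ ∂μ) / ((μ s).toReal * (μ t).toReal)| ∂μ ∂μ) = 0 := by
      rw [Measure.restrict_eq_zero.mpr hs0, integral_zero_measure]
    rw [hLz]
    exact add_nonneg hAnn hBnn
  by_cases ht0 : μ t = 0
  · have h1 : ∀ x, (∫ y in t,
        |W x y - (∫ u in s, ∫ v in t, W u v ∂μ ∂μ) / ((μ s).toReal * (μ t).toReal)| ∂μ) = 0 :=
      fun x => by rw [Measure.restrict_eq_zero.mpr ht0, integral_zero_measure]
    have hLz : (∫ x in s, ∫ y in t,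
        |W x y - (∫ u in s, ∫ v in t, W u v ∂μ ∂μ) / ((μ s).toReal * (μ t).toReal)| ∂μ ∂μ) = 0 := by
      rw [integral_congr_ae (Filter.Eventually.of_forall h1), integral_zero]
    rw [hLz]
    exact add_nonneg hAnn hBnn
  have hs : 0 < (μ s).toReal := ENNReal.toReal_pos hs0 (measure_ne_top μ _)
  have ht : 0 < (μ t).toReal := ENNReal.toReal_pos ht0 (measure_ne_top μ _)
  have hA01 := avg01 μ W hWmeas hW0 hW1 s t
  have habsA : ∀ x y, |W x y -
      (∫ u in s, ∫ v in t, W u v ∂μ ∂μ) / ((μ s).toReal * (μ t).toReal)| ≤ 1 := by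
    intro x y
    rw [abs_le]
    constructor <;> nlinarith [hW0 x y, hW1 x y, hA01.1, hA01.2]
  -- measurability of the two inner quantities
  have hXm : Measurable fun p : J×J => ∫ u in s, |W p.1 p.2 - W u p.2| ∂μ :=
    measInt (μ.restrict s) (f := fun (p : J×J) u => |W p.1 p.2 - W u p.2|) (by fun_prop)
  have hXmx : ∀ x, Measurable fun y => ∫ u in s, |W x y - W u y| ∂μ := fun x =>
    measInt (μ.restrict s) (f := fun y u => |W x y - W u y|) (by fun_prop)
  have hX01 : ∀ x y, 0 ≤ (∫ u in s, |W x y - W u y| ∂μ) ∧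
      (∫ u in s, |W x y - W u y| ∂μ) ≤ 1 := by
    intro x y
    have h01 := int01 μ s (fun u => |W x y - W u y|) (by fun_prop)
      (fun u => abs_nonneg _) (fun u => habs2 x y u y)
    exact ⟨h01.1, h01.2.trans (measReal_le_one μ s)⟩
  have hψinner_m : Measurable fun p : J×J => ∫ v in t, |W p.2 p.1 - W p.2 v| ∂μ :=
    measInt (μ.restrict t) (f := fun (p : J×J) v => |W p.2 p.1 - W p.2 v|) (by fun_prop)
  have hψm : Measurable fun y => ∫ u in s, ∫ v in t, |W u y - W u v| ∂μ ∂μ :=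
    measInt (μ.restrict s) (f := fun y u => ∫ v in t, |W u y - W u v| ∂μ) hψinner_m
  have hψ01 : ∀ y, 0 ≤ (∫ u in s, ∫ v in t, |W u y - W u v| ∂μ ∂μ) ∧
      (∫ u in s, ∫ v in t, |W u y - W u v| ∂μ ∂μ) ≤ 1 := by
    intro y
    have hin : ∀ u, 0 ≤ (∫ v in t, |W u y - W u v| ∂μ) ∧
        (∫ v in t, |W u y - W u v| ∂μ) ≤ 1 := by
      intro u
      have h01 := int01 μ t (fun v => |W u y - W u v|) (by fun_prop)
        (fun v => abs_nonneg _) (fun v => habs2 u y u v)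
      exact ⟨h01.1, h01.2.trans (measReal_le_one μ t)⟩
    have h01 := int01 μ s (fun u => ∫ v in t, |W u y - W u v| ∂μ)
      (measInt (μ.restrict t) (f := fun u v => |W u y - W u v|) (by fun_prop))
      (fun u => (hin u).1) (fun u => (hin u).2)
    exact ⟨h01.1, h01.2.trans (measReal_le_one μ s)⟩
  -- integrabilities for the main comparison
  have hIb : ∀ x, Integrable (fun y => |W x y -
      (∫ u in s, ∫ v in t, W u v ∂μ ∂μ) / ((μ s).toReal * (μ t).toReal)|) (μ.restrict t) :=
    fun x => bddInt (by fun_prop : Measurable fun y => |W x y -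
      (∫ u in s, ∫ v in t, W u v ∂μ ∂μ) / ((μ s).toReal * (μ t).toReal)|).aestronglyMeasurable
      (C := 1) (fun y => by rw [abs_abs]; exact habsA x y)
  have hIRx : ∀ x, Integrable (fun y =>
      (1/(μ s).toReal) * (∫ u in s, |W x y - W u y| ∂μ)
      + (1/((μ s).toReal * (μ t).toReal)) * (∫ u in s, ∫ v in t, |W u y - W u v| ∂μ ∂μ))
      (μ.restrict t) := by
    intro x
    apply Integrable.add
    · exact ((bddInt (hXmx x).aestronglyMeasurable (C := 1)
        (fun y => by rw [abs_of_nonneg (hX01 x y).1]; exact (hX01 x y).2)).const_mul _)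
    · exact ((bddInt hψm.aestronglyMeasurable (C := 1)
        (fun y => by rw [abs_of_nonneg (hψ01 y).1]; exact (hψ01 y).2)).const_mul _)
  have hL : Integrable (fun x => ∫ y in t, |W x y -
      (∫ u in s, ∫ v in t, W u v ∂μ ∂μ) / ((μ s).toReal * (μ t).toReal)| ∂μ) (μ.restrict s) := by
    apply bddInt _ (C := 1)
    · intro x
      exact int_le_const μ t _ (by fun_prop) 1 one_pos.le (fun y => abs_nonneg _)
        (fun y => habsA x y)
    · exact (measInt (μ.restrict t) (f := fun x y => |W x y -
        (∫ u in s, ∫ v in t, W u v ∂μ ∂μ) / ((μ s).toReal * (μ t).toReal)|)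
        (by fun_prop)).aestronglyMeasurable
  have hR : Integrable (fun x => ∫ y in t,
      ((1/(μ s).toReal) * (∫ u in s, |W x y - W u y| ∂μ)
      + (1/((μ s).toReal * (μ t).toReal)) * (∫ u in s, ∫ v in t, |W u y - W u v| ∂μ ∂μ)) ∂μ)
      (μ.restrict s) := by
    apply bddInt _ (C := 1/(μ s).toReal + 1/((μ s).toReal * (μ t).toReal))
    · intro x
      apply int_le_const μ t _ _ _ (by positivity)
      · intro y
        exact add_nonneg (mul_nonneg (by positivity) (hX01 x y).1)
          (mul_nonneg (by positivity) (hψ01 y).1)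
      · intro y
        have e1 : (1/(μ s).toReal) * (∫ u in s, |W x y - W u y| ∂μ) ≤ (1/(μ s).toReal) * 1 :=
          mul_le_mul_of_nonneg_left (hX01 x y).2 (by positivity)
        have e2 : (1/((μ s).toReal * (μ t).toReal)) *
            (∫ u in s, ∫ v in t, |W u y - W u v| ∂μ ∂μ)
            ≤ (1/((μ s).toReal * (μ t).toReal)) * 1 :=
          mul_le_mul_of_nonneg_left (hψ01 y).2 (by positivity)
        linarith
      · exact ((hXmx x).const_mul _).add (hψm.const_mul _)
    · refine (measInt (μ.restrict t) (f := fun x y =>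
        (1/(μ s).toReal) * (∫ u in s, |W x y - W u y| ∂μ)
        + (1/((μ s).toReal * (μ t).toReal)) * (∫ u in s, ∫ v in t, |W u y - W u v| ∂μ ∂μ))
        ?_).aestronglyMeasurable
      exact (hXm.const_mul _).add ((hψm.comp measurable_snd).const_mul _)
  -- main comparison via the pointwise bound
  have key : (∫ x in s, ∫ y in t,
        |W x y - (∫ u in s, ∫ v in t, W u v ∂μ ∂μ) / ((μ s).toReal * (μ t).toReal)| ∂μ ∂μ)
      ≤ ∫ x in s, ∫ y in t,
        ((1/(μ s).toReal) * (∫ u in s, |W x y - W u y| ∂μ)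
        + (1/((μ s).toReal * (μ t).toReal)) * (∫ u in s, ∫ v in t, |W u y - W u v| ∂μ ∂μ)) ∂μ ∂μ := by
    apply integral_mono hL hR
    intro x
    exact integral_mono (hIb x) (hIRx x) (fun y => pointBound μ W hWmeas hW0 hW1 s t hs ht x y)
  -- compute the right-hand side
  have inner_eq : ∀ x, (∫ y in t,
      ((1/(μ s).toReal) * (∫ u in s, |W x y - W u y| ∂μ)
      + (1/((μ s).toReal * (μ t).toReal)) * (∫ u in s, ∫ v in t, |W u y - W u v| ∂μ ∂μ)) ∂μ)
      = (1/(μ s).toReal) * (∫ y in t, ∫ u in s, |W x y - W u y| ∂μ ∂μ)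
        + (1/((μ s).toReal * (μ t).toReal)) *
          (∫ y in t, ∫ u in s, ∫ v in t, |W u y - W u v| ∂μ ∂μ ∂μ) := by
    intro x
    rw [integral_add, integral_const_mul, integral_const_mul]
    · exact ((bddInt (hXmx x).aestronglyMeasurable (C := 1)
        (fun y => by rw [abs_of_nonneg (hX01 x y).1]; exact (hX01 x y).2)).const_mul _)
    · exact ((bddInt hψm.aestronglyMeasurable (C := 1)
        (fun y => by rw [abs_of_nonneg (hψ01 y).1]; exact (hψ01 y).2)).const_mul _)
  have intXd : Integrable (fun x => ∫ y in t, ∫ u in s, |W x y - W u y| ∂μ ∂μ) (μ.restrict s) := by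
    apply bddInt _ (C := 1)
    · intro x
      apply int_le_const μ t _ _ 1 one_pos.le
      · intro y
        exact (hX01 x y).1
      · intro y
        exact (hX01 x y).2
      · exact hXmx x
    · exact (measInt (μ.restrict t) (f := fun x y => ∫ u in s, |W x y - W u y| ∂μ)
        hXm).aestronglyMeasurable
  have outer_eq : (∫ x in s, ∫ y in t,
        ((1/(μ s).toReal) * (∫ u in s, |W x y - W u y| ∂μ)
        + (1/((μ s).toReal * (μ t).toReal)) * (∫ u in s, ∫ v in t, |W u y - W u v| ∂μ ∂μ)) ∂μ ∂μ)
      = (1/(μ s).toReal) * (∫ x in s, ∫ y in t, ∫ u in s, |W x y - W u y| ∂μ ∂μ ∂μ)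
        + (μ s).toReal * ((1/((μ s).toReal * (μ t).toReal)) *
          (∫ y in t, ∫ u in s, ∫ v in t, |W u y - W u v| ∂μ ∂μ ∂μ)) := by
    rw [integral_congr_ae (Filter.Eventually.of_forall inner_eq), integral_add, integral_const_mul,
      setIntegral_const, smul_eq_mul, measureReal_def]
    · exact intXd.const_mul _
    · exact integrable_const _
  have swapA : ∀ x, (∫ y in t, ∫ u in s, |W x y - W u y| ∂μ ∂μ)
      = ∫ u in s, ∫ y in t, |W x y - W u y| ∂μ ∂μ := fun x =>
    swapInt (μ.restrict t) (μ.restrict s) (f := fun y u => |W x y - W u y|) (by fun_prop)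
      (C := 1) (fun a b => by simp only [abs_abs]; exact habs2 x a b a)
  have swapB : ∀ y, (∫ u in s, ∫ v in t, |W u y - W u v| ∂μ ∂μ)
      = ∫ v in t, ∫ u in s, |W u y - W u v| ∂μ ∂μ := fun y =>
    swapInt (μ.restrict s) (μ.restrict t) (f := fun u v => |W u y - W u v|) (by fun_prop)
      (C := 1) (fun a b => by simp only [abs_abs]; exact habs2 a y a b)
  have hscal : (μ s).toReal * ((1/((μ s).toReal * (μ t).toReal)) *
      (∫ y in t, ∫ v in t, ∫ u in s, |W u y - W u v| ∂μ ∂μ ∂μ))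
      = (1/(μ t).toReal) * (∫ y in t, ∫ v in t, ∫ u in s, |W u y - W u v| ∂μ ∂μ ∂μ) := by
    field_simp
  calc (∫ x in s, ∫ y in t,
        |W x y - (∫ u in s, ∫ v in t, W u v ∂μ ∂μ) / ((μ s).toReal * (μ t).toReal)| ∂μ ∂μ)
      ≤ _ := key
    _ = (1/(μ s).toReal) * (∫ x in s, ∫ y in t, ∫ u in s, |W x y - W u y| ∂μ ∂μ ∂μ)
        + (μ s).toReal * ((1/((μ s).toReal * (μ t).toReal)) *
          (∫ y in t, ∫ u in s, ∫ v in t, |W u y - W u v| ∂μ ∂μ ∂μ)) := outer_eq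
    _ = (1/(μ s).toReal) * (∫ x in s, ∫ u in s, ∫ y in t, |W x y - W u y| ∂μ ∂μ ∂μ)
        + (μ s).toReal * ((1/((μ s).toReal * (μ t).toReal)) *
          (∫ y in t, ∫ v in t, ∫ u in s, |W u y - W u v| ∂μ ∂μ ∂μ)) := by
        rw [integral_congr_ae (Filter.Eventually.of_forall swapA),
          integral_congr_ae (Filter.Eventually.of_forall swapB)]
    _ = (1/(μ s).toReal) * (∫ x in s, ∫ u in s, ∫ y in t, |W x y - W u y| ∂μ ∂μ ∂μ)
        + (1/(μ t).toReal) * (∫ y in t, ∫ v in t, ∫ u in s, |W u y - W u v| ∂μ ∂μ ∂μ) := by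
        rw [hscal]
private lemma rowA {J : Type*} [MeasurableSpace J] (μ : Measure J) [IsProbabilityMeasure μ]
    (W : J → J → ℝ) (hWmeas : Measurable fun p : J × J => W p.1 p.2)
    (hW0 : ∀ x y, 0 ≤ W x y) (hW1 : ∀ x y, W x y ≤ 1)
    {m : ℕ} (P : Fin m → Set J) (hPmeas : ∀ i, MeasurableSet (P i))
    (hPdisj : ∀ i j, i ≠ j → Disjoint (P i) (P j)) (hPcov : (⋃ i, P i) = Set.univ)
    (δ : ℝ) (hδ0 : 0 < δ) (i : Fin m)
    (h2δ : ∀ x u, x ∈ P i → u ∈ P i → (∫ w, |W x w - W u w| ∂μ) ≤ 2*δ) :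
    ∑ j, (1/(μ (P i)).toReal) *
        (∫ x in P i, ∫ u in P i, ∫ y in P j, |W x y - W u y| ∂μ ∂μ ∂μ)
      ≤ 2*δ*(μ (P i)).toReal := by
  have habs2 : ∀ a b g e, |W a b - W g e| ≤ (1:ℝ) := by
    intro a b g e
    rw [abs_le]
    constructor <;> nlinarith [hW0 a b, hW1 a b, hW0 g e, hW1 g e]
  by_cases hi0 : μ (P i) = 0
  · have hz : ∀ j : Fin m,
        (∫ x in P i, ∫ u in P i, ∫ y in P j, |W x y - W u y| ∂μ ∂μ ∂μ) = 0 := by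
      intro j
      rw [Measure.restrict_eq_zero.mpr hi0, integral_zero_measure]
    simp only [hz, mul_zero, Finset.sum_const_zero]
    positivity
  · have hai : 0 < (μ (P i)).toReal := ENNReal.toReal_pos hi0 (measure_ne_top μ _)
    have hbint : ∀ x u : J, Integrable (fun w => |W x w - W u w|) μ := fun x u =>
      bddInt (by fun_prop : Measurable fun w => |W x w - W u w|).aestronglyMeasurable
        (C := 1) (fun w => by rw [abs_abs]; exact habs2 x w u w)
    have hinty : ∀ (j : Fin m) (x : J), Measurable fun u => ∫ y in P j, |W x y - W u y| ∂μ :=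
      fun j x => measInt (μ.restrict (P j)) (f := fun u y => |W x y - W u y|) (by fun_prop)
    have hb_inty : ∀ (j : Fin m) (x u : J), |∫ y in P j, |W x y - W u y| ∂μ| ≤ 1 := fun j x u =>
      int_le_const μ (P j) _ (by fun_prop) 1 one_pos.le (fun y => abs_nonneg _)
        (fun y => habs2 x y u y)
    have hIu : ∀ (j : Fin m) (x : J),
        Integrable (fun u => ∫ y in P j, |W x y - W u y| ∂μ) (μ.restrict (P i)) := fun j x =>
      bddInt (hinty j x).aestronglyMeasurable (C := 1) (hb_inty j x)
    have hmx : ∀ j : Fin m,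
        Measurable fun x => ∫ u in P i, ∫ y in P j, |W x y - W u y| ∂μ ∂μ := by
      intro j
      have hin : Measurable fun p : J×J => ∫ y in P j, |W p.1 y - W p.2 y| ∂μ :=
        measInt (μ.restrict (P j)) (f := fun (p : J×J) y => |W p.1 y - W p.2 y|) (by fun_prop)
      exact measInt (μ.restrict (P i)) (f := fun x u => ∫ y in P j, |W x y - W u y| ∂μ) hin
    have hbx : ∀ (j : Fin m) (x : J), |∫ u in P i, ∫ y in P j, |W x y - W u y| ∂μ ∂μ| ≤ 1 :=
      fun j x => int_le_const μ (P i) _ (hinty j x) 1 one_pos.le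
        (fun u => integral_nonneg fun y => abs_nonneg _)
        (fun u => (abs_le.mp (hb_inty j x u)).2)
    have hIx : ∀ j : Fin m,
        Integrable (fun x => ∫ u in P i, ∫ y in P j, |W x y - W u y| ∂μ ∂μ)
          (μ.restrict (P i)) := fun j =>
      bddInt (hmx j).aestronglyMeasurable (C := 1) (hbx j)
    have hsum : ∑ j, (∫ x in P i, ∫ u in P i, ∫ y in P j, |W x y - W u y| ∂μ ∂μ ∂μ)
        = ∫ x in P i, ∫ u in P i, (∫ w, |W x w - W u w| ∂μ) ∂μ ∂μ := by
      rw [← integral_finset_sum Finset.univ (fun j _ => hIx j)]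
      apply integral_congr_ae (Filter.Eventually.of_forall ?_)
      intro x
      rw [← integral_finset_sum Finset.univ (fun j _ => hIu j x)]
      apply integral_congr_ae (Filter.Eventually.of_forall ?_)
      intro u
      exact (partSum μ P hPmeas hPdisj hPcov (fun w => |W x w - W u w|) (hbint x u)).symm
    rw [← Finset.mul_sum, hsum]
    have hrm2 : Measurable fun p : J×J => ∫ w, |W p.1 w - W p.2 w| ∂μ :=
      measInt μ (f := fun (p : J×J) w => |W p.1 w - W p.2 w|) (by fun_prop)
    have hrmx : ∀ x : J, Measurable fun u => ∫ w, |W x w - W u w| ∂μ := fun x =>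
      measInt μ (f := fun u w => |W x w - W u w|) (by fun_prop)
    have hrb : ∀ x u : J, |∫ w, |W x w - W u w| ∂μ| ≤ 1 := fun x u =>
      int_le_const' μ _ (by fun_prop) 1 one_pos.le (fun w => abs_nonneg _)
        (fun w => habs2 x w u w)
    have inner_b : ∀ x, x ∈ P i →
        (∫ u in P i, (∫ w, |W x w - W u w| ∂μ) ∂μ) ≤ 2*δ*(μ (P i)).toReal := by
      intro x hx
      calc (∫ u in P i, (∫ w, |W x w - W u w| ∂μ) ∂μ) ≤ ∫ _ in P i, 2*δ ∂μ :=
            setIntegral_mono_on (bddInt (hrmx x).aestronglyMeasurable (C := 1) (hrb x))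
              (integrable_const _) (hPmeas i) (fun u hu => h2δ x u hx hu)
        _ = 2*δ*(μ (P i)).toReal := by rw [setIntegral_const, smul_eq_mul, measureReal_def]; ring
    have hmo : Measurable fun x => ∫ u in P i, (∫ w, |W x w - W u w| ∂μ) ∂μ :=
      measInt (μ.restrict (P i)) (f := fun x u => ∫ w, |W x w - W u w| ∂μ) hrm2
    have hbo : ∀ x, |∫ u in P i, (∫ w, |W x w - W u w| ∂μ) ∂μ| ≤ 1 := fun x =>
      int_le_const μ (P i) _ (hrmx x) 1 one_pos.le
        (fun u => integral_nonneg fun w => abs_nonneg _) (fun u => (abs_le.mp (hrb x u)).2)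
    have houter : (∫ x in P i, ∫ u in P i, (∫ w, |W x w - W u w| ∂μ) ∂μ ∂μ)
        ≤ (μ (P i)).toReal * (2*δ*(μ (P i)).toReal) := by
      calc (∫ x in P i, ∫ u in P i, (∫ w, |W x w - W u w| ∂μ) ∂μ ∂μ)
          ≤ ∫ _ in P i, 2*δ*(μ (P i)).toReal ∂μ :=
            setIntegral_mono_on (bddInt hmo.aestronglyMeasurable (C := 1) hbo)
              (integrable_const _) (hPmeas i) inner_b
        _ = (μ (P i)).toReal * (2*δ*(μ (P i)).toReal) := by rw [setIntegral_const, smul_eq_mul, measureReal_def]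
    calc (1/(μ (P i)).toReal) * (∫ x in P i, ∫ u in P i, (∫ w, |W x w - W u w| ∂μ) ∂μ ∂μ)
        ≤ (1/(μ (P i)).toReal) * ((μ (P i)).toReal * (2*δ*(μ (P i)).toReal)) :=
          mul_le_mul_of_nonneg_left houter (by positivity)
      _ = 2*δ*(μ (P i)).toReal := by field_simp

private lemma rowB {J : Type*} [MeasurableSpace J] (μ : Measure J) [IsProbabilityMeasure μ]
    (W : J → J → ℝ) (hWmeas : Measurable fun p : J × J => W p.1 p.2)
    (hW0 : ∀ x y, 0 ≤ W x y) (hW1 : ∀ x y, W x y ≤ 1)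
    {m : ℕ} (P : Fin m → Set J) (hPmeas : ∀ i, MeasurableSet (P i))
    (hPdisj : ∀ i j, i ≠ j → Disjoint (P i) (P j)) (hPcov : (⋃ i, P i) = Set.univ)
    (δ : ℝ) (hδ0 : 0 < δ) (j : Fin m)
    (h2δ : ∀ y v, y ∈ P j → v ∈ P j → (∫ u, |W u y - W u v| ∂μ) ≤ 2*δ) :
    ∑ i, (1/(μ (P j)).toReal) *
        (∫ y in P j, ∫ v in P j, ∫ u in P i, |W u y - W u v| ∂μ ∂μ ∂μ)
      ≤ 2*δ*(μ (P j)).toReal := by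
  have habs2 : ∀ a b g e, |W a b - W g e| ≤ (1:ℝ) := by
    intro a b g e
    rw [abs_le]
    constructor <;> nlinarith [hW0 a b, hW1 a b, hW0 g e, hW1 g e]
  by_cases hj0 : μ (P j) = 0
  · have hz : ∀ i : Fin m,
        (∫ y in P j, ∫ v in P j, ∫ u in P i, |W u y - W u v| ∂μ ∂μ ∂μ) = 0 := by
      intro i
      rw [Measure.restrict_eq_zero.mpr hj0, integral_zero_measure]
    simp only [hz, mul_zero, Finset.sum_const_zero]
    positivity
  · have haj : 0 < (μ (P j)).toReal := ENNReal.toReal_pos hj0 (measure_ne_top μ _)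
    have hbint : ∀ y v : J, Integrable (fun u => |W u y - W u v|) μ := fun y v =>
      bddInt (by fun_prop : Measurable fun u => |W u y - W u v|).aestronglyMeasurable
        (C := 1) (fun u => by rw [abs_abs]; exact habs2 u y u v)
    have hintu : ∀ (i : Fin m) (y : J), Measurable fun v => ∫ u in P i, |W u y - W u v| ∂μ :=
      fun i y => measInt (μ.restrict (P i)) (f := fun v u => |W u y - W u v|) (by fun_prop)
    have hb_intu : ∀ (i : Fin m) (y v : J), |∫ u in P i, |W u y - W u v| ∂μ| ≤ 1 := fun i y v =>
      int_le_const μ (P i) _ (by fun_prop) 1 one_pos.le (fun u => abs_nonneg _)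
        (fun u => habs2 u y u v)
    have hIv : ∀ (i : Fin m) (y : J),
        Integrable (fun v => ∫ u in P i, |W u y - W u v| ∂μ) (μ.restrict (P j)) := fun i y =>
      bddInt (hintu i y).aestronglyMeasurable (C := 1) (hb_intu i y)
    have hmy : ∀ i : Fin m,
        Measurable fun y => ∫ v in P j, ∫ u in P i, |W u y - W u v| ∂μ ∂μ := by
      intro i
      have hin : Measurable fun p : J×J => ∫ u in P i, |W u p.1 - W u p.2| ∂μ :=
        measInt (μ.restrict (P i)) (f := fun (p : J×J) u => |W u p.1 - W u p.2|) (by fun_prop)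
      exact measInt (μ.restrict (P j)) (f := fun y v => ∫ u in P i, |W u y - W u v| ∂μ) hin
    have hby : ∀ (i : Fin m) (y : J), |∫ v in P j, ∫ u in P i, |W u y - W u v| ∂μ ∂μ| ≤ 1 :=
      fun i y => int_le_const μ (P j) _ (hintu i y) 1 one_pos.le
        (fun v => integral_nonneg fun u => abs_nonneg _)
        (fun v => (abs_le.mp (hb_intu i y v)).2)
    have hIy : ∀ i : Fin m,
        Integrable (fun y => ∫ v in P j, ∫ u in P i, |W u y - W u v| ∂μ ∂μ)
          (μ.restrict (P j)) := fun i =>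
      bddInt (hmy i).aestronglyMeasurable (C := 1) (hby i)
    have hsum : ∑ i, (∫ y in P j, ∫ v in P j, ∫ u in P i, |W u y - W u v| ∂μ ∂μ ∂μ)
        = ∫ y in P j, ∫ v in P j, (∫ u, |W u y - W u v| ∂μ) ∂μ ∂μ := by
      rw [← integral_finset_sum Finset.univ (fun i _ => hIy i)]
      apply integral_congr_ae (Filter.Eventually.of_forall ?_)
      intro y
      rw [← integral_finset_sum Finset.univ (fun i _ => hIv i y)]
      apply integral_congr_ae (Filter.Eventually.of_forall ?_)
      intro v
      exact (partSum μ P hPmeas hPdisj hPcov (fun u => |W u y - W u v|) (hbint y v)).symm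
    rw [← Finset.mul_sum, hsum]
    have hrm2 : Measurable fun p : J×J => ∫ u, |W u p.1 - W u p.2| ∂μ :=
      measInt μ (f := fun (p : J×J) u => |W u p.1 - W u p.2|) (by fun_prop)
    have hrmx : ∀ y : J, Measurable fun v => ∫ u, |W u y - W u v| ∂μ := fun y =>
      measInt μ (f := fun v u => |W u y - W u v|) (by fun_prop)
    have hrb : ∀ y v : J, |∫ u, |W u y - W u v| ∂μ| ≤ 1 := fun y v =>
      int_le_const' μ _ (by fun_prop) 1 one_pos.le (fun u => abs_nonneg _)
        (fun u => habs2 u y u v)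
    have inner_b : ∀ y, y ∈ P j →
        (∫ v in P j, (∫ u, |W u y - W u v| ∂μ) ∂μ) ≤ 2*δ*(μ (P j)).toReal := by
      intro y hy
      calc (∫ v in P j, (∫ u, |W u y - W u v| ∂μ) ∂μ) ≤ ∫ _ in P j, 2*δ ∂μ :=
            setIntegral_mono_on (bddInt (hrmx y).aestronglyMeasurable (C := 1) (hrb y))
              (integrable_const _) (hPmeas j) (fun v hv => h2δ y v hy hv)
        _ = 2*δ*(μ (P j)).toReal := by rw [setIntegral_const, smul_eq_mul, measureReal_def]; ring
    have hmo : Measurable fun y => ∫ v in P j, (∫ u, |W u y - W u v| ∂μ) ∂μ :=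
      measInt (μ.restrict (P j)) (f := fun y v => ∫ u, |W u y - W u v| ∂μ) hrm2
    have hbo : ∀ y, |∫ v in P j, (∫ u, |W u y - W u v| ∂μ) ∂μ| ≤ 1 := fun y =>
      int_le_const μ (P j) _ (hrmx y) 1 one_pos.le
        (fun v => integral_nonneg fun u => abs_nonneg _) (fun v => (abs_le.mp (hrb y v)).2)
    have houter : (∫ y in P j, ∫ v in P j, (∫ u, |W u y - W u v| ∂μ) ∂μ ∂μ)
        ≤ (μ (P j)).toReal * (2*δ*(μ (P j)).toReal) := by
      calc (∫ y in P j, ∫ v in P j, (∫ u, |W u y - W u v| ∂μ) ∂μ ∂μ)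
          ≤ ∫ _ in P j, 2*δ*(μ (P j)).toReal ∂μ :=
            setIntegral_mono_on (bddInt hmo.aestronglyMeasurable (C := 1) hbo)
              (integrable_const _) (hPmeas j) inner_b
        _ = (μ (P j)).toReal * (2*δ*(μ (P j)).toReal) := by rw [setIntegral_const, smul_eq_mul, measureReal_def]
    calc (1/(μ (P j)).toReal) * (∫ y in P j, ∫ v in P j, (∫ u, |W u y - W u v| ∂μ) ∂μ ∂μ)
        ≤ (1/(μ (P j)).toReal) * ((μ (P j)).toReal * (2*δ*(μ (P j)).toReal)) :=
          mul_le_mul_of_nonneg_left houter (by positivity)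
      _ = 2*δ*(μ (P j)).toReal := by field_simp

private lemma decomp {J : Type*} [MeasurableSpace J] (μ : Measure J) [IsProbabilityMeasure μ]
    (W : J → J → ℝ) (hWmeas : Measurable fun p : J × J => W p.1 p.2)
    (hW0 : ∀ x y, 0 ≤ W x y) (hW1 : ∀ x y, W x y ≤ 1)
    {m : ℕ} (P : Fin m → Set J) (hPmeas : ∀ i, MeasurableSet (P i))
    (hPdisj : ∀ i j, i ≠ j → Disjoint (P i) (P j)) (hPcov : (⋃ i, P i) = Set.univ)
    (idx : J → Fin m) (hidx_meas : Measurable idx)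
    (hidx_eq : ∀ (i : Fin m) (x : J), x ∈ P i → idx x = i)
    (f : Fin m → Fin m → ℝ) (hf01 : ∀ i j, 0 ≤ f i j ∧ f i j ≤ 1) :
    (∫ x, ∫ y, |W x y - f (idx x) (idx y)| ∂μ ∂μ)
      = ∑ i, ∑ j, ∫ x in P i, ∫ y in P j, |W x y - f i j| ∂μ ∂μ := by
  have hWm1 : ∀ a, Measurable (W a) := fun a => hWmeas.comp measurable_prodMk_left
  have hWPm : Measurable fun p : J×J => f (idx p.1) (idx p.2) :=
    (measurable_of_countable (fun q : Fin m × Fin m => f q.1 q.2)).comp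
      ((hidx_meas.comp measurable_fst).prodMk (hidx_meas.comp measurable_snd))
  have hFm : Measurable fun p : J×J => |W p.1 p.2 - f (idx p.1) (idx p.2)| :=
    (hWmeas.sub hWPm).abs
  have hFb : ∀ x y, |W x y - f (idx x) (idx y)| ≤ 1 := by
    intro x y
    have h0 := (hf01 (idx x) (idx y)).1
    have h1 := (hf01 (idx x) (idx y)).2
    rw [abs_le]
    constructor <;> nlinarith [hW0 x y, hW1 x y]
  have hFym : ∀ x, Measurable fun y => |W x y - f (idx x) (idx y)| := by
    intro x
    have h1 : Measurable fun y => f (idx x) (idx y) :=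
      (measurable_of_countable (fun q : Fin m => f (idx x) q)).comp hidx_meas
    exact ((hWm1 x).sub h1).abs
  have hFinner_m : Measurable fun x => ∫ y, |W x y - f (idx x) (idx y)| ∂μ :=
    measInt μ (f := fun x y => |W x y - f (idx x) (idx y)|) hFm
  have hFinner_b : ∀ x, |∫ y, |W x y - f (idx x) (idx y)| ∂μ| ≤ 1 := fun x =>
    int_le_const' μ _ (hFym x) 1 one_pos.le (fun y => abs_nonneg _) (hFb x)
  rw [partSum μ P hPmeas hPdisj hPcov _
    (bddInt hFinner_m.aestronglyMeasurable (C := 1) hFinner_b)]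
  apply Finset.sum_congr rfl
  intro i _
  have step2 : ∀ x, (∫ y, |W x y - f (idx x) (idx y)| ∂μ)
      = ∑ j, ∫ y in P j, |W x y - f (idx x) (idx y)| ∂μ := fun x =>
    partSum μ P hPmeas hPdisj hPcov _ (bddInt (hFym x).aestronglyMeasurable (C := 1)
      (fun y => by rw [abs_abs]; exact hFb x y))
  rw [integral_congr_ae (Filter.Eventually.of_forall step2),
    integral_finset_sum Finset.univ (fun j _ => ?_)]
  · apply Finset.sum_congr rfl
    intro j _
    apply setIntegral_congr_fun (hPmeas i)
    intro x hx
    dsimp only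
    apply setIntegral_congr_fun (hPmeas j)
    intro y hy
    dsimp only
    rw [hidx_eq i x hx, hidx_eq j y hy]
  · apply bddInt (measInt (μ.restrict (P j)) (f := fun x y => |W x y - f (idx x) (idx y)|)
      hFm).aestronglyMeasurable (C := 1)
    intro x
    exact int_le_const μ (P j) _ (hFym x) 1 one_pos.le (fun y => abs_nonneg _) (hFb x)
/-- If the metric space `(J, r_W)` of a graphon `W` has finite packing
dimension `d` (there is a constant `Cp` such that every `ε`-separated set has
at most `Cp·ε^{−d}` points), then there is a constant `c` such that for every
`0 < ε < 1` the graphon has an ultra-strong regularity partition with error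
`ε` into at most `ε^{−c·ε^{−d}}` classes. -/
theorem ultra_strong_partition_of_packing_dimension
    {J : Type*} [MeasurableSpace J] (μ : Measure J) [IsProbabilityMeasure μ]
    (W : J → J → ℝ)
    (hWmeas : Measurable (fun p : J × J => W p.1 p.2))
    (hWsymm : ∀ x y, W x y = W y x)
    (hW0 : ∀ x y, 0 ≤ W x y) (hW1 : ∀ x y, W x y ≤ 1)
    (rW : J → J → ℝ)
    (hrW : ∀ x y, rW x y = ∫ z, |W x z - W y z| ∂μ)
    (d : ℝ) (hd : 0 < d)
    (Cp : ℝ)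
    (hpack : ∀ ε : ℝ, 0 < ε → ε < 1 → ∀ Z : Finset J,
      (∀ x ∈ Z, ∀ y ∈ Z, x ≠ y → ε ≤ rW x y) →
      (Z.card : ℝ) ≤ Cp * ε ^ (-d)) :
    ∃ c : ℝ, 0 < c ∧ ∀ ε : ℝ, 0 < ε → ε < 1 →
      ∃ (n : ℕ) (P : Fin n → Set J) (WP : J → J → ℝ),
        (n : ℝ) ≤ ε ^ (-(c * ε ^ (-d))) ∧
        (∀ i, MeasurableSet (P i)) ∧
        (∀ i j, i ≠ j → Disjoint (P i) (P j)) ∧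
        (⋃ i, P i) = Set.univ ∧
        -- `WP` is the stepwise averaging of `W` over the classes of `P`
        (∀ i j, ∀ x ∈ P i, ∀ y ∈ P j, WP x y =
          (∫ u in P i, ∫ v in P j, W u v ∂μ ∂μ) /
            ((μ (P i)).toReal * (μ (P j)).toReal)) ∧
        (∫ x, ∫ y, |W x y - WP x y| ∂μ ∂μ) ≤ ε := by
  classical
  -- basic measurability of slices
  have hWm1 : ∀ x, Measurable (W x) := fun x => hWmeas.comp measurable_prodMk_left
  have hWm2 : ∀ y, Measurable (fun x => W x y) := fun y => hWmeas.comp measurable_prodMk_right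
  -- basic facts about rW
  have habs1 : ∀ x y z, |W x z - W y z| ≤ (1:ℝ) := by
    intro x y z
    rw [abs_le]
    constructor <;> nlinarith [hW0 x z, hW1 x z, hW0 y z, hW1 y z]
  have hint_abs : ∀ x y, Integrable (fun z => |W x z - W y z|) μ := by
    intro x y
    exact bddInt (((hWm1 x).sub (hWm1 y)).abs).aestronglyMeasurable (fun z => by rw [abs_abs]; exact habs1 x y z)
  have hrW_nonneg : ∀ x y, 0 ≤ rW x y := by
    intro x y; rw [hrW]
    exact integral_nonneg fun z => abs_nonneg _
  have hrW_symm : ∀ x y, rW x y = rW y x := by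
    intro x y; rw [hrW, hrW]
    exact integral_congr_ae (Filter.Eventually.of_forall fun z => abs_sub_comm _ _)
  have hrW_self : ∀ x, rW x x = 0 := by
    intro x; rw [hrW]; simp
  have hrW_tri : ∀ x y w, rW x y ≤ rW x w + rW w y := by
    intro x y w
    rw [hrW, hrW, hrW, ← integral_add (hint_abs x w) (hint_abs w y)]
    exact integral_mono (hint_abs x y)
      ((hint_abs x w).add (hint_abs w y)) fun z => abs_sub_le _ _ _
  have hrW_meas : ∀ c, Measurable (fun x => rW x c) := by
    intro c
    have : (fun x => rW x c) = fun x => ∫ z, |W x z - W c z| ∂μ := funext fun x => hrW x c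
    rw [this]
    exact measInt μ (f := fun x z => |W x z - W c z|)
      ((hWmeas.sub ((hWm1 c).comp measurable_snd)).abs)
  -- J is nonempty
  have hJne : Nonempty J := by
    by_contra h
    rw [not_nonempty_iff] at h
    have h0 : μ Set.univ = 0 := by
      rw [Set.univ_eq_empty_iff.mpr h]; simp
    rw [measure_univ] at h0
    exact one_ne_zero h0
  -- Cp is positive
  have hCp : 0 < Cp := by
    obtain ⟨x0⟩ := hJne
    have h1 : ((({x0} : Finset J).card : ℝ)) ≤ Cp * (1/2 : ℝ) ^ (-d) := by
      apply hpack (1/2) (by norm_num) (by norm_num)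
      intro x hx y hy hxy
      simp only [Finset.mem_singleton] at hx hy
      exact absurd (hx.trans hy.symm) hxy
    simp only [Finset.card_singleton, Nat.cast_one] at h1
    by_contra h
    push_neg at h
    nlinarith [Real.rpow_pos_of_pos (show (0:ℝ) < 1/2 by norm_num) (-d)]
  -- the constant c
  set K : ℝ := Cp * (4:ℝ) ^ (d:ℝ) with hK
  have hKpos : 0 < K := mul_pos hCp (Real.rpow_pos_of_pos (by norm_num) d)
  set L : ℝ := max 1 (Real.log K) with hL
  have hL1 : (1:ℝ) ≤ L := le_max_left _ _
  have hLlog : Real.log K ≤ L := le_max_right _ _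
  have hlog2 : (0:ℝ) < Real.log 2 := Real.log_pos (by norm_num)
  refine ⟨d + L / Real.log 2, by positivity, ?_⟩
  intro ε hε0 hε1
  set c : ℝ := d + L / Real.log 2 with hc
  have hcpos : 0 < c := by positivity
  -- the count bound for the small-ε case
  have hcount : ε < 1/2 → Cp * (ε/4) ^ (-d) ≤ ε ^ (-(c * ε ^ (-d))) := by
    intro hhalf
    have hεd1 : (1:ℝ) ≤ ε ^ (-d) :=
      Real.one_le_rpow_of_pos_of_le_one_of_nonpos hε0 hε1.le (by linarith)
    set t : ℝ := -Real.log ε with htdef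
    have ht : Real.log 2 ≤ t := by
      have h0 : Real.log ε ≤ Real.log (1/2) :=
        (Real.log_le_log_iff hε0 (by norm_num)).mpr (by linarith)
      rw [one_div, Real.log_inv] at h0
      rw [htdef]; linarith
    have ht0 : 0 < t := lt_of_lt_of_le hlog2 ht
    have hlhs : Cp * (ε/4) ^ (-d) = K * ε ^ (-d) := by
      have h4 : ((4:ℝ) ^ (d:ℝ)) ≠ 0 := ne_of_gt (Real.rpow_pos_of_pos (by norm_num) d)
      rw [Real.div_rpow hε0.le (by norm_num), Real.rpow_neg (by norm_num : (0:ℝ) ≤ 4), hK]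
      field_simp
    have hrhs_pos : 0 < ε ^ (-(c * ε ^ (-d))) := Real.rpow_pos_of_pos hε0 _
    have hlhs_pos : 0 < K * ε ^ (-d) := mul_pos hKpos (Real.rpow_pos_of_pos hε0 _)
    rw [hlhs]
    apply (Real.log_le_log_iff hlhs_pos hrhs_pos).mp
    rw [Real.log_mul (ne_of_gt hKpos) (ne_of_gt (Real.rpow_pos_of_pos hε0 _)),
      Real.log_rpow hε0, Real.log_rpow hε0]
    have hεlog : Real.log ε = -t := by rw [htdef]; ring
    have h1 : L ≤ (L / Real.log 2) * t := by
      rw [div_mul_eq_mul_div, le_div_iff₀ hlog2]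
      nlinarith
    have htt : t ≤ ε ^ (-d) * t := by nlinarith
    have h2 : (d + L / Real.log 2) * t ≤ (d + L / Real.log 2) * (ε ^ (-d) * t) := by
      apply mul_le_mul_of_nonneg_left htt
      positivity
    rw [hεlog, hc]
    nlinarith [h1, h2, hLlog, hd, ht0]
  -- integrability of slices of W
  have hWint : ∀ x, Integrable (W x) μ := fun x =>
    bddInt (hWm1 x).aestronglyMeasurable (C := 1)
      (fun z => abs_le.mpr ⟨by linarith [hW0 x z], hW1 x z⟩)
  by_cases hhalf : (1:ℝ)/2 ≤ ε
  · -- single-class partition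
    set a : ℝ := ∫ u, ∫ v, W u v ∂μ ∂μ with hadef
    have hg_meas : Measurable fun x => ∫ y, W x y ∂μ :=
      measInt μ (f := fun x y => W x y) hWmeas
    have hg01 : ∀ x, 0 ≤ (∫ y, W x y ∂μ) ∧ (∫ y, W x y ∂μ) ≤ 1 := by
      intro x
      constructor
      · exact integral_nonneg fun y => hW0 x y
      · calc (∫ y, W x y ∂μ) ≤ ∫ _, (1:ℝ) ∂μ :=
              integral_mono (hWint x) (integrable_const 1) (hW1 x)
          _ = 1 := by simp
    have hgint : Integrable (fun x => ∫ y, W x y ∂μ) μ :=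
      bddInt hg_meas.aestronglyMeasurable (C := 1)
        (fun x => abs_le.mpr ⟨by linarith [(hg01 x).1], (hg01 x).2⟩)
    have ha0 : 0 ≤ a := integral_nonneg fun x => (hg01 x).1
    have ha1 : a ≤ 1 := by
      rw [hadef]
      calc (∫ x, ∫ y, W x y ∂μ ∂μ) ≤ ∫ _, (1:ℝ) ∂μ :=
            integral_mono hgint (integrable_const 1) (fun x => (hg01 x).2)
        _ = 1 := by simp
    refine ⟨1, fun _ => Set.univ, fun _ _ => a, ?_, fun i => MeasurableSet.univ,
      ?_, ?_, ?_, ?_⟩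
    · rw [Nat.cast_one]
      apply Real.one_le_rpow_of_pos_of_le_one_of_nonpos hε0 hε1.le
      have : 0 < c * ε ^ (-d) := mul_pos hcpos (Real.rpow_pos_of_pos hε0 _)
      linarith
    · intro i j hij; exact absurd (Subsingleton.elim i j) hij
    · exact Set.iUnion_const Set.univ
    · intro i j x _ y _
      show a = _
      rw [hadef]
      simp [Measure.restrict_univ, measure_univ]
    · show (∫ x, ∫ y, |W x y - a| ∂μ ∂μ) ≤ ε
      have key : ∀ x y, |W x y - a| ≤ a + (1 - 2*a) * W x y := by
        intro x y
        rcases le_or_gt a (W x y) with h | h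
        · rw [abs_of_nonneg (by linarith)]
          nlinarith [hW0 x y, hW1 x y]
        · rw [abs_of_neg (by linarith)]
          nlinarith [hW0 x y, hW1 x y]
      have habs_bdd : ∀ x y, |W x y - a| ≤ 1 := by
        intro x y
        rw [abs_le]
        constructor <;> nlinarith [hW0 x y, hW1 x y]
      have hinner : ∀ x, (∫ y, |W x y - a| ∂μ) ≤ a + (1 - 2*a) * ∫ y, W x y ∂μ := by
        intro x
        have h1 : (∫ y, |W x y - a| ∂μ) ≤ ∫ y, (a + (1 - 2*a) * W x y) ∂μ := by
          apply integral_mono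
          · exact bddInt ((hWm1 x).sub measurable_const).abs.aestronglyMeasurable (C := 1)
              (fun y => by rw [abs_abs]; exact habs_bdd x y)
          · exact (integrable_const a).add ((hWint x).const_mul _)
          · exact key x
        rwa [integral_add (integrable_const a) ((hWint x).const_mul _),
          integral_const, integral_const_mul, measureReal_def, measure_univ, ENNReal.toReal_one,
          one_smul] at h1
      have hinner_meas : Measurable fun x => ∫ y, |W x y - a| ∂μ :=
        measInt μ (f := fun x y => |W x y - a|) ((hWmeas.sub measurable_const).abs)
      have h2 : (∫ x, ∫ y, |W x y - a| ∂μ ∂μ) ≤ ∫ x, (a + (1 - 2*a) * ∫ y, W x y ∂μ) ∂μ := by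
        apply integral_mono
        · exact bddInt hinner_meas.aestronglyMeasurable (C := 1)
            (fun x => by
              rw [abs_le]
              constructor
              · have : 0 ≤ ∫ y, |W x y - a| ∂μ := integral_nonneg fun y => abs_nonneg _
                linarith
              · calc (∫ y, |W x y - a| ∂μ) ≤ ∫ _, (1:ℝ) ∂μ :=
                    integral_mono (bddInt ((hWm1 x).sub measurable_const).abs.aestronglyMeasurable
                      (C := 1) (fun y => by rw [abs_abs]; exact habs_bdd x y))
                      (integrable_const 1) (fun y => habs_bdd x y)
                  _ = 1 := by simp)
        · exact (integrable_const a).add (hgint.const_mul _)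
        · exact hinner
      rw [integral_add (integrable_const a) (hgint.const_mul _), integral_const,
        integral_const_mul, measureReal_def, measure_univ, ENNReal.toReal_one, one_smul, ← hadef] at h2
      nlinarith [h2, sq_nonneg (2*a - 1)]
  · push_neg at hhalf
    set δ : ℝ := ε/4 with hδdef
    have hδ0 : 0 < δ := by rw [hδdef]; linarith
    have hδ1 : δ < 1 := by rw [hδdef]; linarith
    -- a maximal δ-separated set
    set Sep : Finset J → Prop := fun Z => ∀ x ∈ Z, ∀ y ∈ Z, x ≠ y → δ ≤ rW x y with hSep
    have hcard : ∀ Z : Finset J, Sep Z → (Z.card : ℝ) ≤ Cp * δ ^ (-d) := fun Z hZ =>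
      hpack δ hδ0 hδ1 Z hZ
    set S : Set ℕ := {n | ∃ Z : Finset J, Sep Z ∧ Z.card = n} with hSdef
    have hS0 : 0 ∈ S := ⟨∅, fun x hx => absurd hx (Finset.notMem_empty x), Finset.card_empty⟩
    have hSbdd : BddAbove S := by
      refine ⟨⌊Cp * δ ^ (-d)⌋₊, fun n hn => ?_⟩
      obtain ⟨Z, hZ, hZc⟩ := hn
      apply Nat.le_floor
      rw [← hZc]
      exact hcard Z hZ
    obtain ⟨Z, hZsep, hZcard⟩ := Nat.sSup_mem ⟨0, hS0⟩ hSbdd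
    have hmax : ∀ x : J, ∃ w ∈ Z, rW x w < δ := by
      intro x
      by_contra hcon
      push_neg at hcon
      have hxZ : x ∉ Z := by
        intro hx
        have h0 := hcon x hx
        rw [hrW_self x] at h0
        linarith
      have hsep' : Sep (insert x Z) := by
        intro a ha b hb hab
        rcases Finset.mem_insert.mp ha with rfl | ha'
        · rcases Finset.mem_insert.mp hb with rfl | hb'
          · exact absurd rfl hab
          · exact hcon b hb'
        · rcases Finset.mem_insert.mp hb with rfl | hb'
          · rw [hrW_symm]; exact hcon a ha'
          · exact hZsep a ha' b hb' hab
      have hmem : Z.card + 1 ∈ S :=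
        ⟨insert x Z, hsep', by rw [Finset.card_insert_of_notMem hxZ]⟩
      have hle := le_csSup hSbdd hmem
      rw [← hZcard] at hle
      exact Nat.not_succ_le_self _ hle
    set m : ℕ := Z.card with hm
    set z : Fin m → J := fun i => ((Z.equivFin.symm i) : J) with hz
    have hzcov : ∀ x : J, ∃ i : Fin m, rW x (z i) < δ := by
      intro x
      obtain ⟨w, hwZ, hw⟩ := hmax x
      refine ⟨Z.equivFin ⟨w, hwZ⟩, ?_⟩
      rw [hz]
      simp only [Equiv.symm_apply_apply]
      exact hw
    have hmbound : (m : ℝ) ≤ ε ^ (-(c * ε ^ (-d))) := by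
      have h1 : (m:ℝ) ≤ Cp * δ ^ (-d) := hcard Z hZsep
      rw [hδdef] at h1
      exact h1.trans (hcount hhalf)
    -- the cells of the partition
    set P : Fin m → Set J := fun i =>
      {x | rW x (z i) < δ ∧ ∀ j, j < i → δ ≤ rW x (z j)} with hP
    have hPmeas : ∀ i, MeasurableSet (P i) := by
      intro i
      have h1 : MeasurableSet {x | rW x (z i) < δ} :=
        measurableSet_lt (hrW_meas _) measurable_const
      have h2 : ∀ j : Fin m, MeasurableSet {x | j < i → δ ≤ rW x (z j)} := by
        intro j
        by_cases hj : j < i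
        · simp only [hj, true_implies]
          exact measurableSet_le measurable_const (hrW_meas _)
        · simp only [hj, false_implies, Set.setOf_true]
          exact MeasurableSet.univ
      have heq : P i = {x | rW x (z i) < δ} ∩ ⋂ j, {x | j < i → δ ≤ rW x (z j)} := by
        ext x
        simp only [hP, Set.mem_setOf_eq, Set.mem_inter_iff, Set.mem_iInter]
      rw [heq]
      exact h1.inter (MeasurableSet.iInter h2)
    have hPdisj : ∀ i j : Fin m, i ≠ j → Disjoint (P i) (P j) := by
      have key : ∀ i j : Fin m, i < j → Disjoint (P i) (P j) := by
        intro i j hij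
        rw [Set.disjoint_left]
        rintro x ⟨hx1, -⟩ ⟨-, hx2⟩
        exact absurd hx1 (not_lt.mpr (hx2 i hij))
      intro i j hij
      rcases lt_or_gt_of_ne hij with h | h
      · exact key i j h
      · exact (key j i h).symm
    have hne : ∀ x, (Finset.univ.filter fun i => rW x (z i) < δ).Nonempty := by
      intro x
      obtain ⟨i, hi⟩ := hzcov x
      exact ⟨i, Finset.mem_filter.mpr ⟨Finset.mem_univ i, hi⟩⟩
    set idx : J → Fin m := fun x =>
      (Finset.univ.filter fun i => rW x (z i) < δ).min' (hne x) with hidxdef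
    have hidx_mem : ∀ x, x ∈ P (idx x) := by
      intro x
      constructor
      · have h0 := Finset.min'_mem _ (hne x)
        exact (Finset.mem_filter.mp h0).2
      · intro j hj
        by_contra hcon
        push_neg at hcon
        have hjf : j ∈ Finset.univ.filter fun i => rW x (z i) < δ :=
          Finset.mem_filter.mpr ⟨Finset.mem_univ _, hcon⟩
        exact absurd (Finset.min'_le _ j hjf) (not_le.mpr hj)
    have hPcov : (⋃ i, P i) = Set.univ :=
      Set.eq_univ_of_forall fun x => Set.mem_iUnion.mpr ⟨idx x, hidx_mem x⟩
    have hidx_eq : ∀ (i : Fin m) (x : J), x ∈ P i → idx x = i := by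
      intro i x hx
      by_contra hcon
      exact Set.disjoint_left.mp (hPdisj _ _ hcon) (hidx_mem x) hx
    have hidx_meas : Measurable idx := by
      apply measurable_to_countable
      intro y
      have h0 : idx ⁻¹' {idx y} = P (idx y) := by
        ext x
        simp only [Set.mem_preimage, Set.mem_singleton_iff]
        exact ⟨fun h => h ▸ hidx_mem x, fun h => hidx_eq _ x h⟩
      rw [h0]; exact hPmeas _
    set f : Fin m → Fin m → ℝ := fun i j =>
      (∫ u in P i, ∫ v in P j, W u v ∂μ ∂μ) / ((μ (P i)).toReal * (μ (P j)).toReal) with hf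
    refine ⟨m, P, fun x y => f (idx x) (idx y), hmbound, hPmeas, hPdisj, hPcov, ?_, ?_⟩
    · intro i j x hx y hy
      show f (idx x) (idx y) = _
      rw [hidx_eq i x hx, hidx_eq j y hy]
    · -- the error bound
      show (∫ x, ∫ y, |W x y - f (idx x) (idx y)| ∂μ ∂μ) ≤ ε
      have hf01 : ∀ i j, 0 ≤ f i j ∧ f i j ≤ 1 := by
        intro i j
        simpa only [hf] using avg01 μ W hWmeas hW0 hW1 (P i) (P j)
      rw [decomp μ W hWmeas hW0 hW1 P hPmeas hPdisj hPcov idx hidx_meas hidx_eq f hf01]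
      have hpair : ∀ i j : Fin m, (∫ x in P i, ∫ y in P j, |W x y - f i j| ∂μ ∂μ)
          ≤ (1/(μ (P i)).toReal) *
              (∫ x in P i, ∫ u in P i, ∫ y in P j, |W x y - W u y| ∂μ ∂μ ∂μ)
            + (1/(μ (P j)).toReal) *
              (∫ y in P j, ∫ v in P j, ∫ u in P i, |W u y - W u v| ∂μ ∂μ ∂μ) := by
        intro i j
        have h1 := pairBound μ W hWmeas hW0 hW1 (P i) (P j)
        simp only [hf]
        exact h1
      have hrow1 : ∀ i : Fin m, ∑ j, (1/(μ (P i)).toReal) *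
          (∫ x in P i, ∫ u in P i, ∫ y in P j, |W x y - W u y| ∂μ ∂μ ∂μ)
          ≤ 2*δ*(μ (P i)).toReal := by
        intro i
        apply rowA μ W hWmeas hW0 hW1 P hPmeas hPdisj hPcov δ hδ0 i
        intro x u hx hu
        have h3 := hrW_tri x u (z i)
        rw [hrW_symm (z i) u] at h3
        calc (∫ w, |W x w - W u w| ∂μ) = rW x u := (hrW x u).symm
          _ ≤ 2*δ := by linarith [hx.1, hu.1]
      have hrow2 : ∀ j : Fin m, ∑ i, (1/(μ (P j)).toReal) *
          (∫ y in P j, ∫ v in P j, ∫ u in P i, |W u y - W u v| ∂μ ∂μ ∂μ)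
          ≤ 2*δ*(μ (P j)).toReal := by
        intro j
        apply rowB μ W hWmeas hW0 hW1 P hPmeas hPdisj hPcov δ hδ0 j
        intro y v hy hv
        have hsymm : (∫ u, |W u y - W u v| ∂μ) = (∫ u, |W y u - W v u| ∂μ) :=
          integral_congr_ae (Filter.Eventually.of_forall fun u => by
            dsimp only
            rw [hWsymm u y, hWsymm u v])
        rw [hsymm, ← hrW y v]
        have h3 := hrW_tri y v (z j)
        rw [hrW_symm (z j) v] at h3
        linarith [hy.1, hv.1]
      have hsum_ai : ∑ i, (μ (P i)).toReal = 1 := by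
        have h1 : ∑ i, μ (P i) = 1 := by
          rw [← tsum_fintype (L := SummationFilter.unconditional _), ← measure_iUnion (fun i j hij => hPdisj i j hij) hPmeas, hPcov,
            measure_univ]
        rw [← ENNReal.toReal_sum (fun i _ => measure_ne_top μ _), h1, ENNReal.toReal_one]
      calc (∑ i, ∑ j, ∫ x in P i, ∫ y in P j, |W x y - f i j| ∂μ ∂μ)
          ≤ ∑ i, ∑ j, ((1/(μ (P i)).toReal) *
              (∫ x in P i, ∫ u in P i, ∫ y in P j, |W x y - W u y| ∂μ ∂μ ∂μ)
            + (1/(μ (P j)).toReal) *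
              (∫ y in P j, ∫ v in P j, ∫ u in P i, |W u y - W u v| ∂μ ∂μ ∂μ)) :=
            Finset.sum_le_sum fun i _ => Finset.sum_le_sum fun j _ => hpair i j
        _ = (∑ i, ∑ j, (1/(μ (P i)).toReal) *
              (∫ x in P i, ∫ u in P i, ∫ y in P j, |W x y - W u y| ∂μ ∂μ ∂μ))
            + ∑ i, ∑ j, (1/(μ (P j)).toReal) *
              (∫ y in P j, ∫ v in P j, ∫ u in P i, |W u y - W u v| ∂μ ∂μ ∂μ) := by
            simp only [Finset.sum_add_distrib]
        _ ≤ (∑ i, 2*δ*(μ (P i)).toReal) + ∑ j, 2*δ*(μ (P j)).toReal := by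
            apply add_le_add
            · exact Finset.sum_le_sum fun i _ => hrow1 i
            · rw [Finset.sum_comm]
              exact Finset.sum_le_sum fun j _ => hrow2 j
        _ = 2*δ + 2*δ := by
            rw [← Finset.mul_sum, hsum_ai, mul_one]
        _ ≤ ε := by rw [hδdef]; linarith
end

section
/- If a graphon (J,W) is pure and for some bigraph F = (U₁,U₂,E) we have t^b_ind(F,W) = 0, then for every point x₀ ∈ J, W(x₀,y) ∈ {0,1} for almost all y ∈ J. -/
open MeasureTheory

private lemma abs_prod_sub_prod_le' {ι : Type*} (s : Finset ι) (a b : ι → ℝ)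
    (ha : ∀ i ∈ s, |a i| ≤ 1) (hb : ∀ i ∈ s, |b i| ≤ 1) :
    |(∏ i ∈ s, a i) - ∏ i ∈ s, b i| ≤ ∑ i ∈ s, |a i - b i| := by
  classical
  induction s using Finset.induction_on with
  | empty => simp
  | @insert i s hi ih =>
    rw [Finset.prod_insert hi, Finset.prod_insert hi, Finset.sum_insert hi]
    have hai : |a i| ≤ 1 := ha i (Finset.mem_insert_self i s)
    have hbs : |∏ j ∈ s, b j| ≤ 1 := by
      rw [Finset.abs_prod]
      exact Finset.prod_le_one (fun j _ => abs_nonneg _)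
        (fun j hj => hb j (Finset.mem_insert_of_mem hj))
    have ih' := ih (fun j hj => ha j (Finset.mem_insert_of_mem hj))
      (fun j hj => hb j (Finset.mem_insert_of_mem hj))
    have key : a i * ∏ j ∈ s, a j - b i * ∏ j ∈ s, b j
        = a i * ((∏ j ∈ s, a j) - ∏ j ∈ s, b j) + (a i - b i) * ∏ j ∈ s, b j := by ring
    calc |a i * ∏ j ∈ s, a j - b i * ∏ j ∈ s, b j|
        ≤ |a i * ((∏ j ∈ s, a j) - ∏ j ∈ s, b j)| + |(a i - b i) * ∏ j ∈ s, b j| := by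
          rw [key]; exact abs_add_le _ _
      _ = |a i| * |(∏ j ∈ s, a j) - ∏ j ∈ s, b j| + |a i - b i| * |∏ j ∈ s, b j| := by
          rw [abs_mul, abs_mul]
      _ ≤ 1 * (∑ j ∈ s, |a j - b j|) + |a i - b i| * 1 :=
          add_le_add (mul_le_mul hai ih' (abs_nonneg _) zero_le_one)
            (mul_le_mul_of_nonneg_left hbs (abs_nonneg _))
      _ = |a i - b i| + ∑ j ∈ s, |a j - b j| := by ring

private lemma integrable_of_abs_le' {α : Type*} [MeasurableSpace α] {ν : Measure α}
    [IsFiniteMeasure ν] {g : α → ℝ} (hg : Measurable g) {C : ℝ} (h : ∀ a, |g a| ≤ C) :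
    Integrable g ν :=
  Integrable.mono' (integrable_const C) hg.aestronglyMeasurable
    (Filter.Eventually.of_forall fun a => by simpa using h a)

/-- If a pure graphon `(J,W)` satisfies `t^b_ind(F,W) = 0` for some bigraph
`F = (U₁,U₂,E)` (viewing `W` as a bigraphon with `J₁ = J₂ = J`), then for
every point `x₀ ∈ J`, `W(x₀,y) ∈ {0,1}` for almost all `y`. -/
theorem pure_thin_graphon_rows_zero_one
    {J : Type*} [MetricSpace J] [CompleteSpace J] [TopologicalSpace.SeparableSpace J]
    [MeasurableSpace J] [BorelSpace J]
    (μ : Measure J) [IsProbabilityMeasure μ] [μ.IsOpenPosMeasure]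
    (W : J → J → ℝ)
    (hWmeas : Measurable (fun p : J × J => W p.1 p.2))
    (hWsymm : ∀ x y, W x y = W y x)
    (hW0 : ∀ x y, 0 ≤ W x y) (hW1 : ∀ x y, W x y ≤ 1)
    (hdist : ∀ x y : J, dist x y = ∫ z, |W x z - W y z| ∂μ)
    (k₁ k₂ : ℕ) (E : Finset (Fin k₁ × Fin k₂))
    (hthin : (∫ x : Fin k₁ → J, ∫ y : Fin k₂ → J,
      (∏ i, ∏ j, if (i, j) ∈ E then W (x i) (y j) else 1 - W (x i) (y j))
        ∂(Measure.pi fun _ => μ) ∂(Measure.pi fun _ => μ)) = 0) :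
    ∀ x₀ : J, ∀ᵐ y ∂μ, W x₀ y = 0 ∨ W x₀ y = 1 := by
  classical
  letI : MeasureSpace J := ⟨μ⟩
  haveI : IsProbabilityMeasure (volume : Measure J) := ‹IsProbabilityMeasure μ›
  haveI : (volume : Measure J).IsOpenPosMeasure := ‹μ.IsOpenPosMeasure›
  intro x₀
  set ν₁ : Measure (Fin k₁ → J) := Measure.pi fun _ => μ with hν₁def
  set ν₂ : Measure (Fin k₂ → J) := Measure.pi fun _ => μ with hν₂def
  set T : (Fin k₁ × Fin k₂) → J → J → ℝ :=
    fun p u v => if p ∈ E then W u v else 1 - W u v with hTdef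
  set P : (Fin k₁ → J) → (Fin k₂ → J) → ℝ :=
    fun x y => ∏ p : Fin k₁ × Fin k₂, T p (x p.1) (y p.2) with hPdef
  -- basic facts about T
  have hT0 : ∀ p u v, 0 ≤ T p u v := by
    intro p u v
    simp only [hTdef]
    split_ifs
    · exact hW0 u v
    · linarith [hW1 u v]
  have hT1 : ∀ p u v, T p u v ≤ 1 := by
    intro p u v
    simp only [hTdef]
    split_ifs
    · exact hW1 u v
    · linarith [hW0 u v]
  have hTabs : ∀ p u v, |T p u v| ≤ 1 :=
    fun p u v => abs_le.2 ⟨by linarith [hT0 p u v], hT1 p u v⟩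
  have hTsub : ∀ p u u' v, |T p u v - T p u' v| = |W u v - W u' v| := by
    intro p u u' v
    simp only [hTdef]
    split_ifs
    · rfl
    · rw [show (1 - W u v) - (1 - W u' v) = -(W u v - W u' v) by ring, abs_neg]
  -- measurability helpers
  have hWm : ∀ (u : J), Measurable (fun z : J => W u z) :=
    fun u => hWmeas.comp (measurable_const.prodMk measurable_id)
  have hWmy : ∀ (u : J) (j : Fin k₂), Measurable (fun y : Fin k₂ → J => W u (y j)) :=
    fun u j => hWmeas.comp (measurable_const.prodMk (measurable_pi_apply j))
  have hTm : ∀ (p : Fin k₁ × Fin k₂) (u : J),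
      Measurable (fun y : Fin k₂ → J => T p u (y p.2)) := by
    intro p u
    by_cases hp : p ∈ E
    · simpa [hTdef, hp] using hWmy u p.2
    · simp only [hTdef, hp, if_false]; exact measurable_const.sub (hWmy u p.2)
  have hPmeas : ∀ x, Measurable (fun y => P x y) := by
    intro x
    exact Finset.measurable_prod _ (fun p _ => hTm p (x p.1))
  have hP0 : ∀ x y, 0 ≤ P x y :=
    fun x y => Finset.prod_nonneg fun p _ => hT0 p (x p.1) (y p.2)
  have hP1 : ∀ x y, P x y ≤ 1 :=
    fun x y => Finset.prod_le_one (fun p _ => hT0 p (x p.1) (y p.2))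
      (fun p _ => hT1 p (x p.1) (y p.2))
  have hPabs : ∀ x y, |P x y| ≤ 1 :=
    fun x y => abs_le.2 ⟨by linarith [hP0 x y], hP1 x y⟩
  have hPint : ∀ x, Integrable (fun y => P x y) ν₂ :=
    fun x => integrable_of_abs_le' (hPmeas x) (hPabs x)
  -- the partially integrated density
  set f : (Fin k₁ → J) → ℝ := fun x => ∫ y, P x y ∂ν₂ with hfdef
  have hf0 : ∀ x, 0 ≤ f x := fun x => integral_nonneg fun y => hP0 x y
  have hf1 : ∀ x, f x ≤ 1 := by
    intro x
    calc f x ≤ ∫ _y, (1 : ℝ) ∂ν₂ :=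
          integral_mono (hPint x) (integrable_const 1) (fun y => hP1 x y)
      _ = 1 := by simp
  -- marginalization lemma
  have hmarg : ∀ (g : J → ℝ), Measurable g → (∀ z, |g z| ≤ 1) → ∀ (j : Fin k₂),
      (∫ y : Fin k₂ → J, g (y j) ∂ν₂) = ∫ z, g z ∂μ := by
    intro g hg hgb j
    have h1 : ∀ y : Fin k₂ → J, g (y j) = ∏ j' : Fin k₂, (if j' = j then g (y j') else 1) := by
      intro y
      rw [Finset.prod_ite_eq' Finset.univ j (fun j' => g (y j'))]
      simp
    have h2 : (∫ y : Fin k₂ → J, ∏ j' : Fin k₂, (if j' = j then g (y j') else 1) ∂ν₂)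
        = ∏ j' : Fin k₂, ∫ z, (if j' = j then g z else 1) ∂μ :=
      MeasureTheory.integral_fintype_prod_eq_prod
        (fun j' z => if j' = j then g z else 1)
    have h3 : ∀ j' : Fin k₂,
        (∫ z, (if j' = j then g z else 1) ∂μ) = if j' = j then ∫ z, g z ∂μ else 1 := by
      intro j'
      split_ifs
      · rfl
      · simp
    simp_rw [h1]
    rw [h2]
    simp_rw [h3]
    rw [Finset.prod_ite_eq' Finset.univ j (fun _ => ∫ z, g z ∂μ)]
    simp
  -- f is Lipschitz
  have hfLip : LipschitzWith ((k₁ * k₂ : ℕ) : NNReal) f := by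
    apply LipschitzWith.of_dist_le_mul
    intro x x'
    rw [Real.dist_eq]
    have hsub : f x - f x' = ∫ y, (P x y - P x' y) ∂ν₂ :=
      (integral_sub (hPint x) (hPint x')).symm
    have h2 : |f x - f x'| ≤ ∫ y, |P x y - P x' y| ∂ν₂ := by
      rw [hsub]
      simpa [Real.norm_eq_abs] using
        norm_integral_le_integral_norm (fun y => P x y - P x' y) (μ := ν₂)
    have h3 : ∀ y, |P x y - P x' y|
        ≤ ∑ p : Fin k₁ × Fin k₂, |W (x p.1) (y p.2) - W (x' p.1) (y p.2)| := by
      intro y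
      have := abs_prod_sub_prod_le' Finset.univ
        (fun p : Fin k₁ × Fin k₂ => T p (x p.1) (y p.2))
        (fun p : Fin k₁ × Fin k₂ => T p (x' p.1) (y p.2))
        (fun p _ => hTabs p (x p.1) (y p.2)) (fun p _ => hTabs p (x' p.1) (y p.2))
      refine this.trans (le_of_eq (Finset.sum_congr rfl fun p _ => ?_))
      exact hTsub p (x p.1) (x' p.1) (y p.2)
    have hip : ∀ p : Fin k₁ × Fin k₂,
        Integrable (fun y : Fin k₂ → J => |W (x p.1) (y p.2) - W (x' p.1) (y p.2)|) ν₂ := by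
      intro p
      refine integrable_of_abs_le' (((hWmy (x p.1) p.2).sub (hWmy (x' p.1) p.2)).abs) (C := 1) ?_
      intro y
      rw [abs_abs]
      exact abs_le.2 ⟨by linarith [hW0 (x p.1) (y p.2), hW1 (x' p.1) (y p.2)],
        by linarith [hW1 (x p.1) (y p.2), hW0 (x' p.1) (y p.2)]⟩
    have h4 : (∫ y, |P x y - P x' y| ∂ν₂)
        ≤ ∑ p : Fin k₁ × Fin k₂, ∫ y : Fin k₂ → J,
            |W (x p.1) (y p.2) - W (x' p.1) (y p.2)| ∂ν₂ := by
      rw [← integral_finset_sum _ (fun p _ => hip p)]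
      refine integral_mono ?_ ?_ h3
      · refine integrable_of_abs_le' (((hPmeas x).sub (hPmeas x')).abs) (C := 2) ?_
        intro y
        rw [abs_abs]
        obtain ⟨l1, r1⟩ := abs_le.1 (hPabs x y)
        obtain ⟨l2, r2⟩ := abs_le.1 (hPabs x' y)
        rw [abs_le]
        constructor <;> linarith
      · exact integrable_finset_sum _ (fun p _ => hip p)
    have h5 : ∀ p : Fin k₁ × Fin k₂,
        (∫ y : Fin k₂ → J, |W (x p.1) (y p.2) - W (x' p.1) (y p.2)| ∂ν₂)
          = dist (x p.1) (x' p.1) := by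
      intro p
      rw [hdist]
      refine hmarg (fun z => |W (x p.1) z - W (x' p.1) z|)
        (((hWm (x p.1)).sub (hWm (x' p.1))).abs) ?_ p.2
      intro z
      rw [abs_abs]
      exact abs_le.2 ⟨by linarith [hW0 (x p.1) z, hW1 (x' p.1) z],
        by linarith [hW1 (x p.1) z, hW0 (x' p.1) z]⟩
    calc |f x - f x'| ≤ ∑ p : Fin k₁ × Fin k₂, ∫ y : Fin k₂ → J,
            |W (x p.1) (y p.2) - W (x' p.1) (y p.2)| ∂ν₂ := h2.trans h4
      _ = ∑ p : Fin k₁ × Fin k₂, dist (x p.1) (x' p.1) :=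
          Finset.sum_congr rfl fun p _ => h5 p
      _ ≤ ∑ _p : Fin k₁ × Fin k₂, dist x x' :=
          Finset.sum_le_sum fun p _ => dist_le_pi_dist x x' p.1
      _ = ((k₁ * k₂ : ℕ) : ℝ) * dist x x' := by
          rw [Finset.sum_const, Finset.card_univ, Fintype.card_prod, Fintype.card_fin,
            Fintype.card_fin, nsmul_eq_mul]
      _ = ((k₁ * k₂ : ℕ) : NNReal) * dist x x' := by
          push_cast
          ring
  have hfcont : Continuous f := hfLip.continuous
  have hfint : Integrable f ν₁ :=
    integrable_of_abs_le' hfcont.measurable (C := 1)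
      (fun x => abs_le.2 ⟨by linarith [hf0 x], hf1 x⟩)
  -- the double integral equals ∫ f
  have hthin' : (∫ x, f x ∂ν₁) = 0 := by
    rw [← hthin]
    refine integral_congr_ae (Filter.Eventually.of_forall fun x => ?_)
    refine integral_congr_ae (Filter.Eventually.of_forall fun y => ?_)
    simp only [hPdef, hTdef]
    rw [Fintype.prod_prod_type]
  have hfae : f =ᵐ[ν₁] 0 :=
    (integral_eq_zero_iff_of_nonneg (fun x => hf0 x) hfint).1 hthin'
  have hfeq : f = 0 := (Continuous.ae_eq_iff_eq ν₁ hfcont continuous_const).1 hfae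
  -- evaluate at the constant point
  have hconst : (∫ y, P (fun _ => x₀) y ∂ν₂) = 0 := congrFun hfeq (fun _ => x₀)
  set g : Fin k₂ → J → ℝ := fun j z => ∏ i : Fin k₁, T (i, j) x₀ z with hgdef
  have hPg : ∀ y : Fin k₂ → J, P (fun _ => x₀) y = ∏ j : Fin k₂, g j (y j) := by
    intro y
    simp only [hPdef, hgdef]
    rw [Fintype.prod_prod_type]
    exact Finset.prod_comm
  have hfact : (∏ j : Fin k₂, ∫ z, g j z ∂μ) = 0 := by
    have h2 : (∫ y : Fin k₂ → J, ∏ j : Fin k₂, g j (y j) ∂ν₂)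
        = ∏ j : Fin k₂, ∫ z, g j z ∂μ :=
      MeasureTheory.integral_fintype_prod_eq_prod g
    rw [← h2, ← hconst]
    exact integral_congr_ae (Filter.Eventually.of_forall fun y => (hPg y).symm)
  obtain ⟨j, -, hj⟩ := Finset.prod_eq_zero_iff.1 hfact
  have hgm : Measurable (g j) := by
    refine Finset.measurable_prod _ (fun i _ => ?_)
    by_cases hij : (i, j) ∈ E
    · simpa [hTdef, hij] using hWm x₀
    · simp only [hTdef, hij, if_false]; exact measurable_const.sub (hWm x₀)
  have hg0 : ∀ z, 0 ≤ g j z := fun z => Finset.prod_nonneg fun i _ => hT0 (i, j) x₀ z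
  have hg1 : ∀ z, g j z ≤ 1 :=
    fun z => Finset.prod_le_one (fun i _ => hT0 (i, j) x₀ z) (fun i _ => hT1 (i, j) x₀ z)
  have hgint : Integrable (g j) μ :=
    integrable_of_abs_le' hgm (C := 1) (fun z => abs_le.2 ⟨by linarith [hg0 z], hg1 z⟩)
  have hgae : g j =ᵐ[μ] 0 :=
    (integral_eq_zero_iff_of_nonneg (fun z => hg0 z) hgint).1 hj
  filter_upwards [hgae] with z hz
  obtain ⟨i, -, hi⟩ := Finset.prod_eq_zero_iff.1 (by simpa using hz)
  by_cases hij : (i, j) ∈ E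
  · left
    simpa [hTdef, hij] using hi
  · right
    simp only [hTdef, hij, if_neg, if_false] at hi
    linarith [hi]
end
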